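/- For 1 ≤ p < ∞ and s > 0, the map h_p^(s) : ℓ^p → ℓ^p is a homeomorphism of ℓ^p onto itself. -/

import Mathlib

open scoped ENNReal

noncomputable def lpTail (p : ℝ≥0∞) (x : ℕ → ℂ) (n : ℕ) : ℝ :=
  ∑' k : ℕ, ‖x (n + k)‖ ^ p.toReal

noncomputable def hMap (p : ℝ≥0∞) (s : ℝ) (x : ℕ → ℂ) (n : ℕ) : ℂ :=
  if x n = 0 then 0
  else (x n / ‖x n‖) *
    ((((lpTail p x n) ^ s - (lpTail p x (n + 1)) ^ s) ^ (1 / p.toReal) : ℝ) : ℂ)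

namespace HMapAux

variable {p : ℝ≥0∞} {s : ℝ} {x : ℕ → ℂ}

lemma summable_shift (hx : Summable fun n => ‖x n‖ ^ p.toReal) (n : ℕ) :
    Summable fun k => ‖x (n + k)‖ ^ p.toReal :=
  ((summable_nat_add_iff n).2 hx).congr fun k => by rw [add_comm]

lemma lpTail_nonneg (p : ℝ≥0∞) (x : ℕ → ℂ) (n : ℕ) : 0 ≤ lpTail p x n :=
  tsum_nonneg fun _ => Real.rpow_nonneg (norm_nonneg _) _

lemma lpTail_succ (hx : Summable fun n => ‖x n‖ ^ p.toReal) (n : ℕ) :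
    lpTail p x n = ‖x n‖ ^ p.toReal + lpTail p x (n + 1) := by
  rw [lpTail, Summable.tsum_eq_zero_add (summable_shift hx n)]
  rw [add_zero]
  congr 1
  rw [lpTail]
  exact tsum_congr fun k => by rw [show n + (k + 1) = n + 1 + k by omega]

lemma lpTail_succ_le (hx : Summable fun n => ‖x n‖ ^ p.toReal) (n : ℕ) :
    lpTail p x (n + 1) ≤ lpTail p x n := by
  rw [lpTail_succ hx n]
  have := Real.rpow_nonneg (norm_nonneg (x n)) p.toReal
  linarith

lemma lpTail_tendsto (x : ℕ → ℂ) :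
    Filter.Tendsto (fun n => lpTail p x n) Filter.atTop (nhds 0) := by
  have : (fun n => lpTail p x n) = fun n => ∑' k : ℕ, ‖x (k + n)‖ ^ p.toReal := by
    funext n; exact tsum_congr fun k => by rw [add_comm]
  rw [this]
  exact tendsto_sum_nat_add (fun k => ‖x k‖ ^ p.toReal)

end HMapAux

namespace HMapAux

variable {p : ℝ≥0∞} {s : ℝ} {x : ℕ → ℂ}

lemma norm_hMap (hq : 0 < p.toReal) (hs : 0 < s)
    (hx : Summable fun n => ‖x n‖ ^ p.toReal) (n : ℕ) :
    ‖hMap p s x n‖ = ((lpTail p x n) ^ s - (lpTail p x (n + 1)) ^ s) ^ (1 / p.toReal) := by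
  by_cases h : x n = 0
  · have ht : lpTail p x n = lpTail p x (n + 1) := by
      rw [lpTail_succ hx n, h, norm_zero, Real.zero_rpow hq.ne', zero_add]
    rw [hMap, if_pos h, ht, sub_self, Real.zero_rpow (by positivity), norm_zero]
  · have hsub : 0 ≤ (lpTail p x n) ^ s - (lpTail p x (n + 1)) ^ s :=
      sub_nonneg.2 (Real.rpow_le_rpow (lpTail_nonneg p x (n + 1)) (lpTail_succ_le hx n) hs.le)
    rw [hMap, if_neg h, norm_mul]
    have h1 : ‖x n / (‖x n‖ : ℂ)‖ = 1 := by
      rw [norm_div, Complex.norm_real, Real.norm_eq_abs, abs_norm,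
        div_self (norm_ne_zero_iff.2 h)]
    rw [h1, one_mul, Complex.norm_real, Real.norm_eq_abs,
      abs_of_nonneg (Real.rpow_nonneg hsub _)]

lemma norm_hMap_rpow (hq : 0 < p.toReal) (hs : 0 < s)
    (hx : Summable fun n => ‖x n‖ ^ p.toReal) (n : ℕ) :
    ‖hMap p s x n‖ ^ p.toReal = (lpTail p x n) ^ s - (lpTail p x (n + 1)) ^ s := by
  have hsub : 0 ≤ (lpTail p x n) ^ s - (lpTail p x (n + 1)) ^ s :=
    sub_nonneg.2 (Real.rpow_le_rpow (lpTail_nonneg p x (n + 1)) (lpTail_succ_le hx n) hs.le)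
  rw [norm_hMap hq hs hx n, ← Real.rpow_mul hsub, one_div,
    inv_mul_cancel₀ hq.ne', Real.rpow_one]

lemma hasSum_hMap (hq : 0 < p.toReal) (hs : 0 < s)
    (hx : Summable fun n => ‖x n‖ ^ p.toReal) (n : ℕ) :
    HasSum (fun k => ‖hMap p s x (n + k)‖ ^ p.toReal) ((lpTail p x n) ^ s) := by
  rw [hasSum_iff_tendsto_nat_of_nonneg
    (fun k => Real.rpow_nonneg (norm_nonneg _) _)]
  have hpart : ∀ m : ℕ, ∑ k ∈ Finset.range m, ‖hMap p s x (n + k)‖ ^ p.toReal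
      = (lpTail p x n) ^ s - (lpTail p x (n + m)) ^ s := by
    intro m
    have : ∀ k, ‖hMap p s x (n + k)‖ ^ p.toReal
        = (fun i => (lpTail p x (n + i)) ^ s) k - (fun i => (lpTail p x (n + i)) ^ s) (k + 1) := by
      intro k
      rw [norm_hMap_rpow hq hs hx (n + k)]
      simp only [add_assoc]
    simp only [this]
    rw [Finset.sum_range_sub' (fun i => (lpTail p x (n + i)) ^ s) m]
    simp
  simp only [hpart]
  have h0 : Filter.Tendsto (fun m => lpTail p x (n + m)) Filter.atTop (nhds 0) := by
    have := (lpTail_tendsto (p := p) x).comp (Filter.tendsto_add_atTop_nat n)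
    simpa [Function.comp_def, add_comm] using this
  have h1 : Filter.Tendsto (fun m => (lpTail p x (n + m)) ^ s) Filter.atTop (nhds 0) := by
    have hc : ContinuousAt (fun r : ℝ => r ^ s) 0 :=
      Real.continuousAt_rpow_const 0 s (Or.inr hs.le)
    have := (hc.tendsto).comp h0
    simpa [Function.comp_def, Real.zero_rpow hs.ne'] using this
  simpa using tendsto_const_nhds.sub h1

lemma summable_hMap (hq : 0 < p.toReal) (hs : 0 < s)
    (hx : Summable fun n => ‖x n‖ ^ p.toReal) :
    Summable fun n => ‖hMap p s x n‖ ^ p.toReal :=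
  ((hasSum_hMap hq hs hx 0).summable).congr fun k => by rw [zero_add]

lemma memℓp_hMap (hq : 0 < p.toReal) (hs : 0 < s)
    (hx : Summable fun n => ‖x n‖ ^ p.toReal) : Memℓp (hMap p s x) p :=
  memℓp_gen (summable_hMap hq hs hx)

lemma lpTail_hMap (hq : 0 < p.toReal) (hs : 0 < s)
    (hx : Summable fun n => ‖x n‖ ^ p.toReal) (n : ℕ) :
    lpTail p (hMap p s x) n = (lpTail p x n) ^ s :=
  (hasSum_hMap hq hs hx n).tsum_eq

end HMapAux

namespace HMapAux

variable {p : ℝ≥0∞} {s : ℝ} {x : ℕ → ℂ}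

lemma hMap_eq_zero_iff (hq : 0 < p.toReal) (hs : 0 < s)
    (hx : Summable fun n => ‖x n‖ ^ p.toReal) (n : ℕ) :
    hMap p s x n = 0 ↔ x n = 0 := by
  constructor
  · intro h
    by_contra hxn
    have hlt : lpTail p x (n + 1) < lpTail p x n := by
      rw [lpTail_succ hx n]
      have : 0 < ‖x n‖ ^ p.toReal :=
        Real.rpow_pos_of_pos (norm_pos_iff.2 hxn) _
      linarith
    have hpos : 0 < (lpTail p x n) ^ s - (lpTail p x (n + 1)) ^ s :=
      sub_pos.2 (Real.rpow_lt_rpow (lpTail_nonneg p x (n + 1)) hlt hs)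
    have : ‖hMap p s x n‖ = 0 := by rw [h, norm_zero]
    rw [norm_hMap hq hs hx n] at this
    exact absurd this (ne_of_gt (Real.rpow_pos_of_pos hpos _))
  · intro h; rw [hMap, if_pos h]

lemma hMap_hMap (hq : 0 < p.toReal) (hs : 0 < s)
    (hx : Summable fun n => ‖x n‖ ^ p.toReal) :
    hMap p (1 / s) (hMap p s x) = x := by
  funext n
  set y := hMap p s x with hy
  by_cases h : x n = 0
  · have hyn : y n = 0 := (hMap_eq_zero_iff hq hs hx n).2 h
    rw [hMap, if_pos hyn, h]
  · have hyn : y n ≠ 0 := fun h' => h ((hMap_eq_zero_iff hq hs hx n).1 h')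
    have hT : ∀ m, lpTail p y m = (lpTail p x m) ^ s := lpTail_hMap hq hs hx
    have hinner : (lpTail p y n) ^ (1 / s) - (lpTail p y (n + 1)) ^ (1 / s)
        = lpTail p x n - lpTail p x (n + 1) := by
      rw [hT n, hT (n + 1), ← Real.rpow_mul (lpTail_nonneg p x n),
        ← Real.rpow_mul (lpTail_nonneg p x (n + 1)), mul_one_div, div_self hs.ne',
        Real.rpow_one, Real.rpow_one]
    have hsub : lpTail p x n - lpTail p x (n + 1) = ‖x n‖ ^ p.toReal := by
      rw [lpTail_succ hx n]; ring
    have hmag : ((lpTail p y n) ^ (1 / s) - (lpTail p y (n + 1)) ^ (1 / s)) ^ (1 / p.toReal)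
        = ‖x n‖ := by
      rw [hinner, hsub, ← Real.rpow_mul (norm_nonneg _), mul_one_div,
        div_self hq.ne', Real.rpow_one]
    have hnorm : ‖y n‖ = ((lpTail p x n) ^ s - (lpTail p x (n + 1)) ^ s) ^ (1 / p.toReal) :=
      norm_hMap hq hs hx n
    rw [hMap, if_neg hyn, hmag]
    have hrpos : 0 < ((lpTail p x n) ^ s - (lpTail p x (n + 1)) ^ s) ^ (1 / p.toReal) := by
      have hlt : lpTail p x (n + 1) < lpTail p x n := by
        rw [lpTail_succ hx n]
        have : 0 < ‖x n‖ ^ p.toReal := Real.rpow_pos_of_pos (norm_pos_iff.2 h) _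
        linarith
      have hpos : 0 < (lpTail p x n) ^ s - (lpTail p x (n + 1)) ^ s :=
        sub_pos.2 (Real.rpow_lt_rpow (lpTail_nonneg p x (n + 1)) hlt hs)
      exact Real.rpow_pos_of_pos hpos _
    set r : ℝ := ((lpTail p x n) ^ s - (lpTail p x (n + 1)) ^ s) ^ (1 / p.toReal) with hrdef
    have hnre : ‖x n / (‖x n‖ : ℂ) * (r : ℂ)‖ = r := by
      rw [norm_mul, norm_div, Complex.norm_real, Complex.norm_real, Real.norm_eq_abs,
        Real.norm_eq_abs, abs_norm, div_self (norm_ne_zero_iff.2 h), one_mul,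
        abs_of_nonneg hrpos.le]
    have : y n / (‖y n‖ : ℂ) = x n / (‖x n‖ : ℂ) := by
      rw [hy, hMap, if_neg h, hnre, mul_div_assoc, div_self (Complex.ofReal_ne_zero.2 hrpos.ne'),
        mul_one]
    rw [this, div_mul_cancel₀]
    exact Complex.ofReal_ne_zero.2 (norm_ne_zero_iff.2 h)

end HMapAux

namespace HMapAux

variable {p : ℝ≥0∞} {s : ℝ}

lemma rpow_sub_le {q : ℝ} (hq : 0 < q) (a b : ℂ) :
    ‖a - b‖ ^ q ≤ 2 ^ q * (‖a‖ ^ q + ‖b‖ ^ q) := by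
  have h1 : ‖a - b‖ ≤ 2 * max ‖a‖ ‖b‖ := by
    calc ‖a - b‖ ≤ ‖a‖ + ‖b‖ := norm_sub_le a b
    _ ≤ 2 * max ‖a‖ ‖b‖ := by
        have := le_max_left ‖a‖ ‖b‖
        have := le_max_right ‖a‖ ‖b‖
        linarith
  calc ‖a - b‖ ^ q ≤ (2 * max ‖a‖ ‖b‖) ^ q :=
        Real.rpow_le_rpow (norm_nonneg _) h1 hq.le
  _ = 2 ^ q * (max ‖a‖ ‖b‖) ^ q :=
        Real.mul_rpow (by norm_num) (le_max_of_le_left (norm_nonneg _))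
  _ ≤ 2 ^ q * (‖a‖ ^ q + ‖b‖ ^ q) := by
      gcongr 2 ^ q * ?_
      rcases max_cases ‖a‖ ‖b‖ with ⟨h, _⟩ | ⟨h, _⟩ <;> rw [h]
      · have := Real.rpow_nonneg (norm_nonneg b) q; linarith
      · have := Real.rpow_nonneg (norm_nonneg a) q; linarith

variable [Fact (1 ≤ p)]

lemma continuous_coord (hp0 : p ≠ 0) (n : ℕ) :
    Continuous fun y : lp (fun _ : ℕ => ℂ) p => (y : ℕ → ℂ) n := by
  refine LipschitzWith.continuous (K := 1) (LipschitzWith.of_dist_le_mul fun f g => ?_)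
  have := lp.norm_apply_le_norm hp0 (f - g) n
  simpa [dist_eq_norm, lp.coeFn_sub] using this

lemma lpTail_eq (hq : 0 < p.toReal) (y : lp (fun _ : ℕ => ℂ) p) (n : ℕ) :
    lpTail p (y : ℕ → ℂ) n
      = ‖y‖ ^ p.toReal - ∑ k ∈ Finset.range n, ‖(y : ℕ → ℂ) k‖ ^ p.toReal := by
  have hsum := (lp.memℓp y).summable hq
  have h1 : ∑ k ∈ Finset.range n, ‖(y : ℕ → ℂ) k‖ ^ p.toReal
      + ∑' k : ℕ, ‖(y : ℕ → ℂ) (k + n)‖ ^ p.toReal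
      = ∑' k : ℕ, ‖(y : ℕ → ℂ) k‖ ^ p.toReal := hsum.sum_add_tsum_nat_add n
  have h2 : lpTail p (y : ℕ → ℂ) n = ∑' k : ℕ, ‖(y : ℕ → ℂ) (k + n)‖ ^ p.toReal :=
    tsum_congr fun k => by rw [add_comm]
  have h3 : ‖y‖ ^ p.toReal = ∑' k : ℕ, ‖(y : ℕ → ℂ) k‖ ^ p.toReal :=
    lp.norm_rpow_eq_tsum hq y
  linarith

lemma continuous_lpTail (hq : 0 < p.toReal) (hp0 : p ≠ 0) (n : ℕ) :
    Continuous fun y : lp (fun _ : ℕ => ℂ) p => lpTail p (y : ℕ → ℂ) n := by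
  have hc : Continuous fun y : lp (fun _ : ℕ => ℂ) p =>
      ‖y‖ ^ p.toReal - ∑ k ∈ Finset.range n, ‖(y : ℕ → ℂ) k‖ ^ p.toReal := by
    refine Continuous.sub (continuous_norm.rpow_const fun _ => Or.inr hq.le) ?_
    exact continuous_finset_sum _ fun k _ =>
      ((continuous_coord hp0 k).norm).rpow_const fun _ => Or.inr hq.le
  exact hc.congr fun y => (lpTail_eq hq y n).symm

lemma continuous_gfun (hq : 0 < p.toReal) (hp0 : p ≠ 0) (hs : 0 < s) (n : ℕ) :
    Continuous fun y : lp (fun _ : ℕ => ℂ) p =>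
      ((lpTail p (y : ℕ → ℂ) n) ^ s - (lpTail p (y : ℕ → ℂ) (n + 1)) ^ s) ^ (1 / p.toReal) := by
  refine Continuous.rpow_const ?_ fun _ => Or.inr (by positivity)
  exact ((continuous_lpTail hq hp0 n).rpow_const fun _ => Or.inr hs.le).sub
    ((continuous_lpTail hq hp0 (n + 1)).rpow_const fun _ => Or.inr hs.le)

lemma continuousAt_coordMap (hq : 0 < p.toReal) (hp0 : p ≠ 0) (hs : 0 < s)
    (x : lp (fun _ : ℕ => ℂ) p) (n : ℕ) :
    ContinuousAt (fun y : lp (fun _ : ℕ => ℂ) p => hMap p s (y : ℕ → ℂ) n) x := by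
  by_cases h : (x : ℕ → ℂ) n = 0
  · rw [ContinuousAt, hMap, if_pos h]
    rw [tendsto_zero_iff_norm_tendsto_zero]
    have heq : ∀ y : lp (fun _ : ℕ => ℂ) p, ‖hMap p s (y : ℕ → ℂ) n‖
        = ((lpTail p (y : ℕ → ℂ) n) ^ s
            - (lpTail p (y : ℕ → ℂ) (n + 1)) ^ s) ^ (1 / p.toReal) :=
      fun y => norm_hMap hq hs ((lp.memℓp y).summable hq) n
    have hx0 : lpTail p (x : ℕ → ℂ) n = lpTail p (x : ℕ → ℂ) (n + 1) := by
      rw [lpTail_succ ((lp.memℓp x).summable hq) n, h, norm_zero,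
        Real.zero_rpow hq.ne', zero_add]
    have := (continuous_gfun hq hp0 hs n).tendsto x
    rw [hx0, sub_self, Real.zero_rpow (by positivity : (1 / p.toReal : ℝ) ≠ 0)] at this
    exact this.congr fun y => (heq y).symm
  · have hU : IsOpen {y : lp (fun _ : ℕ => ℂ) p | (y : ℕ → ℂ) n ≠ 0} :=
      isOpen_compl_singleton.preimage (continuous_coord hp0 n)
    have hFx : ContinuousAt (fun y : lp (fun _ : ℕ => ℂ) p =>
        ((y : ℕ → ℂ) n / (‖(y : ℕ → ℂ) n‖ : ℂ)) *
          ((((lpTail p (y : ℕ → ℂ) n) ^ s - (lpTail p (y : ℕ → ℂ) (n + 1)) ^ s)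
            ^ (1 / p.toReal) : ℝ) : ℂ)) x := by
      refine ContinuousAt.mul (ContinuousAt.div ?_ ?_ ?_) ?_
      · exact (continuous_coord hp0 n).continuousAt
      · exact (Complex.continuous_ofReal.comp
          (continuous_coord hp0 n).norm).continuousAt
      · simpa using Complex.ofReal_ne_zero.2 (norm_ne_zero_iff.2 h)
      · exact (Complex.continuous_ofReal.comp (continuous_gfun hq hp0 hs n)).continuousAt
    refine hFx.congr ?_
    refine Filter.eventuallyEq_of_mem (hU.mem_nhds h) fun y hy => ?_
    rw [hMap, if_neg hy]

end HMapAux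

namespace HMapAux

variable {p : ℝ≥0∞} {s : ℝ} [Fact (1 ≤ p)]

noncomputable def hOp (hq : 0 < p.toReal) (hs : 0 < s) (x : lp (fun _ : ℕ => ℂ) p) :
    lp (fun _ : ℕ => ℂ) p :=
  ⟨hMap p s (x : ℕ → ℂ), memℓp_hMap hq hs ((lp.memℓp x).summable hq)⟩

lemma coeFn_hOp (hq : 0 < p.toReal) (hs : 0 < s) (x : lp (fun _ : ℕ => ℂ) p) :
    (hOp hq hs x : ℕ → ℂ) = hMap p s (x : ℕ → ℂ) := rfl

set_option maxHeartbeats 2000000 in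
lemma continuous_hOp (hq : 0 < p.toReal) (hp0 : p ≠ 0) (hs : 0 < s) :
    Continuous (hOp hq hs : lp (fun _ : ℕ => ℂ) p → lp (fun _ : ℕ => ℂ) p) := by
  rw [continuous_iff_continuousAt]
  intro x
  rw [ContinuousAt, Metric.tendsto_nhds]
  intro ε hε
  set q := p.toReal with hqdef
  have hεq : 0 < ε ^ q := Real.rpow_pos_of_pos hε q
  set c := (2 : ℝ) ^ q with hcdef
  have hc : 0 < c := Real.rpow_pos_of_pos (by norm_num) q
  -- choose N
  have htendN : Filter.Tendsto (fun N => (lpTail p (x : ℕ → ℂ) N) ^ s)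
      Filter.atTop (nhds 0) := by
    have hcont : ContinuousAt (fun r : ℝ => r ^ s) 0 :=
      Real.continuousAt_rpow_const 0 s (Or.inr hs.le)
    have := hcont.tendsto.comp (lpTail_tendsto (p := p) (x : ℕ → ℂ))
    simpa [Function.comp_def, Real.zero_rpow hs.ne'] using this
  obtain ⟨N, hN⟩ := (htendN.eventually_lt_const
    (show (0:ℝ) < ε ^ q / (8 * c) by positivity)).exists
  -- eventual facts
  have hsumx := (lp.memℓp x).summable hq
  -- finite sum part
  have hfin : ∀ᶠ y : lp (fun _ : ℕ => ℂ) p in nhds x, ∑ n ∈ Finset.range N,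
      ‖hMap p s (y : ℕ → ℂ) n - hMap p s (x : ℕ → ℂ) n‖ ^ q < ε ^ q / 2 := by
    have hcont : Filter.Tendsto (fun y : lp (fun _ : ℕ => ℂ) p =>
        ∑ n ∈ Finset.range N,
          ‖hMap p s (y : ℕ → ℂ) n - hMap p s (x : ℕ → ℂ) n‖ ^ q)
        (nhds x) (nhds (∑ _n ∈ Finset.range N, (0 : ℝ))) := by
      refine tendsto_finset_sum _ fun n _ => ?_
      have h1 : ContinuousAt (fun y : lp (fun _ : ℕ => ℂ) p =>
          ‖hMap p s (y : ℕ → ℂ) n - hMap p s (x : ℕ → ℂ) n‖ ^ q) x := by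
        refine ContinuousAt.rpow_const ?_ (Or.inr hq.le)
        exact (ContinuousAt.sub (continuousAt_coordMap hq hp0 hs x n)
          continuousAt_const).norm
      have h2 := h1.tendsto
      rwa [sub_self, norm_zero, Real.zero_rpow hq.ne'] at h2
    rw [Finset.sum_const_zero] at hcont
    exact hcont.eventually_lt_const (by positivity)
  have htail : ∀ᶠ y : lp (fun _ : ℕ => ℂ) p in nhds x, (lpTail p (y : ℕ → ℂ) N) ^ s < ε ^ q / (8 * c) := by
    have hcont : ContinuousAt (fun y : lp (fun _ : ℕ => ℂ) p =>
        (lpTail p (y : ℕ → ℂ) N) ^ s) x :=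
      ((continuous_lpTail hq hp0 N).rpow_const fun _ => Or.inr hs.le).continuousAt
    exact hcont.tendsto.eventually_lt_const hN
  filter_upwards [hfin, htail] with y hy1 hy2
  -- now the estimate
  have hsumy := (lp.memℓp y).summable hq
  set dfun : ℕ → ℝ := fun n => ‖hMap p s (y : ℕ → ℂ) n - hMap p s (x : ℕ → ℂ) n‖ ^ q
    with hdfun
  have hd_nonneg : ∀ n, 0 ≤ dfun n := fun n => Real.rpow_nonneg (norm_nonneg _) _
  have hbound_sum : Summable fun n => c * (‖hMap p s (y : ℕ → ℂ) n‖ ^ q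
      + ‖hMap p s (x : ℕ → ℂ) n‖ ^ q) :=
    ((summable_hMap hq hs hsumy).add (summable_hMap hq hs hsumx)).mul_left c
  have hd_le : ∀ n, dfun n ≤ c * (‖hMap p s (y : ℕ → ℂ) n‖ ^ q
      + ‖hMap p s (x : ℕ → ℂ) n‖ ^ q) := fun n => rpow_sub_le hq _ _
  have hd_sum : Summable dfun :=
    Summable.of_nonneg_of_le hd_nonneg hd_le hbound_sum
  -- tail bound
  have htail_le : ∑' k : ℕ, dfun (k + N)
      ≤ c * ((lpTail p (y : ℕ → ℂ) N) ^ s + (lpTail p (x : ℕ → ℂ) N) ^ s) := by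
    have hsum_shift_y : ∑' k : ℕ, ‖hMap p s (y : ℕ → ℂ) (k + N)‖ ^ q
        = (lpTail p (y : ℕ → ℂ) N) ^ s := by
      rw [← (hasSum_hMap hq hs hsumy N).tsum_eq]
      exact tsum_congr fun k => by rw [add_comm k N]
    have hsum_shift_x : ∑' k : ℕ, ‖hMap p s (x : ℕ → ℂ) (k + N)‖ ^ q
        = (lpTail p (x : ℕ → ℂ) N) ^ s := by
      rw [← (hasSum_hMap hq hs hsumx N).tsum_eq]
      exact tsum_congr fun k => by rw [add_comm k N]
    have hsy : Summable fun k => ‖hMap p s (y : ℕ → ℂ) (k + N)‖ ^ q :=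
      (summable_nat_add_iff N).2 (summable_hMap hq hs hsumy)
    have hsx : Summable fun k => ‖hMap p s (x : ℕ → ℂ) (k + N)‖ ^ q :=
      (summable_nat_add_iff N).2 (summable_hMap hq hs hsumx)
    calc ∑' k : ℕ, dfun (k + N)
        ≤ ∑' k : ℕ, c * (‖hMap p s (y : ℕ → ℂ) (k + N)‖ ^ q
            + ‖hMap p s (x : ℕ → ℂ) (k + N)‖ ^ q) := by
          refine Summable.tsum_le_tsum (fun k => hd_le (k + N)) ((summable_nat_add_iff N).2 hd_sum) ?_
          exact ((hsy.add hsx).mul_left c)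
      _ = c * (∑' k : ℕ, ‖hMap p s (y : ℕ → ℂ) (k + N)‖ ^ q
            + ∑' k : ℕ, ‖hMap p s (x : ℕ → ℂ) (k + N)‖ ^ q) := by
          rw [tsum_mul_left, Summable.tsum_add hsy hsx]
      _ = c * ((lpTail p (y : ℕ → ℂ) N) ^ s + (lpTail p (x : ℕ → ℂ) N) ^ s) := by
          rw [hsum_shift_y, hsum_shift_x]
  have hsplit : ∑' n, dfun n = ∑ n ∈ Finset.range N, dfun n + ∑' k : ℕ, dfun (k + N) :=
    (hd_sum.sum_add_tsum_nat_add N).symm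
  -- lpTail x N ^ s bound
  have hxN : (lpTail p (x : ℕ → ℂ) N) ^ s < ε ^ q / (8 * c) := hN
  have htotal : ∑' n, dfun n < ε ^ q := by
    have h2 : ∑' k : ℕ, dfun (k + N) ≤ c * (ε ^ q / (8 * c) + ε ^ q / (8 * c)) := by
      refine htail_le.trans ?_
      have := lpTail_nonneg p (y : ℕ → ℂ) N
      have := lpTail_nonneg p (x : ℕ → ℂ) N
      nlinarith [hy2, hxN, hc]
    have h3 : c * (ε ^ q / (8 * c) + ε ^ q / (8 * c)) = ε ^ q / 4 := by
      field_simp; ring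
    rw [hsplit]
    linarith [hy1, h2, h3]
  -- conclude
  rw [dist_eq_norm]
  have hnorm_eq : ‖hOp hq hs y - hOp hq hs x‖ ^ q = ∑' n, dfun n := by
    rw [lp.norm_rpow_eq_tsum hq (hOp hq hs y - hOp hq hs x)]
    refine tsum_congr fun n => ?_
    congr 1
  have hlt : ‖hOp hq hs y - hOp hq hs x‖ ^ q < ε ^ q := by rw [hnorm_eq]; exact htotal
  exact (Real.rpow_lt_rpow_iff (norm_nonneg _) hε.le hq).1 hlt
end HMapAux

/-- `h_p^(s)` is a homeomorphism of `ℓ^p` onto itself. -/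
theorem hMap_homeomorph (p : ℝ≥0∞) [Fact (1 ≤ p)] (hp : p ≠ ∞) (s : ℝ) (hs : 0 < s)
    (H : lp (fun _ : ℕ => ℂ) p → lp (fun _ : ℕ => ℂ) p)
    (hH : ∀ (x : lp (fun _ : ℕ => ℂ) p) (n : ℕ), (H x : ℕ → ℂ) n = hMap p s x n) :
    ∃ e : lp (fun _ : ℕ => ℂ) p ≃ₜ lp (fun _ : ℕ => ℂ) p, ⇑e = H := by
  have hp0 : p ≠ 0 := (zero_lt_one.trans_le (Fact.out : 1 ≤ p)).ne'
  have hq : 0 < p.toReal := ENNReal.toReal_pos hp0 hp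
  have hs' : 0 < 1 / s := by positivity
  refine ⟨{ toFun := HMapAux.hOp hq hs
            invFun := HMapAux.hOp hq hs'
            left_inv := fun x => Subtype.ext
              (HMapAux.hMap_hMap hq hs ((lp.memℓp x).summable hq))
            right_inv := fun x => Subtype.ext (by
              have h2 := HMapAux.hMap_hMap hq hs' ((lp.memℓp x).summable hq)
              rwa [one_div_one_div] at h2)
            continuous_toFun := HMapAux.continuous_hOp hq hp0 hs
            continuous_invFun := HMapAux.continuous_hOp hq hp0 hs' }, ?_⟩
  funext x
  exact Subtype.ext (funext fun n => (hH x n).symm)
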